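/- Let K be a field, n a natural number, and A an n×n matrix with entries in the polynomial ring K[x] such that det A ≠ 0 (equivalently, A is invertible as a matrix over the rational function field K(x)). Then the cokernel K[x]ⁿ / A·K[x]ⁿ is a finite-dimensional K-vector space whose dimension over K equals the degree of the polynomial det A. -/

import Mathlib

set_option maxHeartbeats 1000000

open Polynomial Matrix

/-- If `A` is an `n × n` matrix over `K[x]` (`K` a field) with nonzero determinant, then the
cokernel `K[x]ⁿ / A·K[x]ⁿ` is a finite-dimensional `K`-vector space of dimension
`deg (det A)`. -/
theorem polynomial_matrix_cokernel_finrank_eq_natDegree_det (K : Type*) [Field K] (n : ℕ)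
    (A : Matrix (Fin n) (Fin n) (Polynomial K)) (hA : A.det ≠ 0) :
    FiniteDimensional K ((Fin n → Polynomial K) ⧸ LinearMap.range A.mulVecLin) ∧
      Module.finrank K ((Fin n → Polynomial K) ⧸ LinearMap.range A.mulVecLin) =
        A.det.natDegree := by
  classical
  set N := LinearMap.range A.mulVecLin with hNdef
  have hinj : Function.Injective A.mulVecLin := by
    rw [← LinearMap.ker_eq_bot, Matrix.ker_mulVecLin_eq_bot_iff]
    intro v hv
    have h1 : A.adjugate *ᵥ (A *ᵥ v) = A.det • v := by
      rw [Matrix.mulVec_mulVec, Matrix.adjugate_mul, Matrix.smul_mulVec, Matrix.one_mulVec]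
    rw [hv, Matrix.mulVec_zero] at h1
    exact ((smul_eq_zero.mp h1.symm).resolve_left hA)
  let φ : (Fin n → K[X]) ≃ₗ[K[X]] N := LinearEquiv.ofInjective A.mulVecLin hinj
  obtain ⟨m, bM, bN, f, a, hsnf⟩ := Submodule.smithNormalForm (Pi.basisFun K[X] (Fin n)) N
  have hm : n = m := by
    simpa using (Fintype.card_congr ((bN.map φ.symm).indexEquiv (Pi.basisFun K[X] (Fin n)))).symm
  subst hm
  let e : Equiv.Perm (Fin n) :=
    Equiv.ofBijective f ((Fintype.bijective_iff_injective_and_card f).mpr ⟨f.injective, rfl⟩)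
  have hef : ∀ i, e i = f i := fun i => rfl
  have ha : ∀ i, a i ≠ 0 := by
    intro i h0
    have h := hsnf i
    rw [h0, zero_smul] at h
    exact bN.ne_zero i (Subtype.coe_injective (h.trans rfl))
  have hrepr : ∀ i j, bM.repr (bN i : Fin n → K[X]) j = if f i = j then a i else 0 := by
    intro i j
    rw [hsnf i, LinearEquiv.map_smul]
    simp [Module.Basis.repr_self, Finsupp.single_apply, smul_eq_mul]
  have hsum : ∀ (c : Fin n → K[X]) (j),
      bM.repr (∑ i, c i • (bN i : Fin n → K[X])) j = c (e.symm j) * a (e.symm j) := by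
    intro c j
    have h1 : bM.repr (∑ i, c i • (bN i : Fin n → K[X])) j
        = ∑ i, c i * bM.repr (bN i : Fin n → K[X]) j := by
      rw [map_sum, Finset.sum_apply']
      refine Finset.sum_congr rfl fun i _ => ?_
      rw [LinearEquiv.map_smul, Finsupp.smul_apply, smul_eq_mul]
    have hfe : f (e.symm j) = j := e.apply_symm_apply j
    rw [h1, Finset.sum_eq_single (e.symm j)]
    · rw [hrepr, if_pos hfe]
    · intro i _ hi
      rw [hrepr, if_neg, mul_zero]
      intro hfi
      exact hi (by rw [← e.symm_apply_apply i, hef, hfi])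
    · simp
  have key : ∀ x : Fin n → K[X], x ∈ N ↔ ∀ j, a (e.symm j) ∣ bM.repr x j := by
    intro x
    constructor
    · intro hx j
      obtain ⟨c, rfl⟩ := bN.mem_submodule_iff'.mp hx
      exact ⟨c (e.symm j), by rw [hsum, mul_comm]⟩
    · intro h
      choose d hd using h
      refine bN.mem_submodule_iff'.mpr ⟨fun i => d (f i), bM.ext_elem fun j => ?_⟩
      rw [hsum]
      have : f (e.symm j) = j := e.apply_symm_apply j
      rw [this, hd j, mul_comm]
  have hmap : Submodule.map (bM.equivFun : (Fin n → K[X]) →ₗ[K[X]] (Fin n → K[X])) N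
      = Submodule.pi Set.univ (fun j => Submodule.span K[X] {a (e.symm j)}) := by
    ext y
    simp only [Submodule.mem_map, Submodule.mem_pi, Set.mem_univ, forall_true_left,
      Submodule.mem_span_singleton, LinearEquiv.coe_coe, Module.Basis.equivFun_apply]
    constructor
    · rintro ⟨x, hx, rfl⟩ j
      obtain ⟨d, hd⟩ := (key x).mp hx j
      exact ⟨d, by rw [hd, mul_comm, smul_eq_mul]⟩
    · intro h
      have hy : ∀ j, bM.repr (bM.equivFun.symm y) j = y j := fun j => by
        rw [← Module.Basis.equivFun_apply, LinearEquiv.apply_symm_apply]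
      refine ⟨bM.equivFun.symm y, (key _).mpr fun j => ?_, bM.equivFun.apply_symm_apply y⟩
      obtain ⟨d, hd⟩ := h j
      exact ⟨d, by rw [hy j, ← hd, smul_eq_mul, mul_comm]⟩
  let q1 := Submodule.Quotient.equiv N _ bM.equivFun hmap
  let q2 := Submodule.quotientPi (fun j => (Submodule.span K[X] {a (e.symm j)} : Submodule K[X] K[X]))
  have hfin : ∀ p : K[X], p ≠ 0 → Module.Finite K (K[X] ⧸ Submodule.span K[X] {p})
      ∧ Module.finrank K (K[X] ⧸ Submodule.span K[X] {p}) = p.natDegree := by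
    intro p hp
    have eqv : (K[X] ⧸ Submodule.span K[X] {p}) ≃ₗ[K] AdjoinRoot p := LinearEquiv.refl K _
    have := (AdjoinRoot.powerBasis hp).finite
    exact ⟨Module.Finite.equiv eqv.symm,
      by rw [eqv.finrank_eq, (AdjoinRoot.powerBasis hp).finrank, AdjoinRoot.powerBasis_dim]⟩
  haveI : ∀ j, Module.Finite K (K[X] ⧸ Submodule.span K[X] {a (e.symm j)}) :=
    fun j => (hfin _ (ha _)).1
  let q : ((Fin n → K[X]) ⧸ N) ≃ₗ[K] ∀ j, K[X] ⧸ Submodule.span K[X] {a (e.symm j)} :=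
    (q1.trans q2).restrictScalars K
  haveI hFD : FiniteDimensional K ((Fin n → K[X]) ⧸ N) := Module.Finite.equiv q.symm
  -- determinant identity
  have hcomp : N.subtype ∘ₗ (φ : (Fin n → K[X]) →ₗ[K[X]] N) = A.mulVecLin := by
    ext x
    rfl
  have hDP : LinearMap.toMatrix bM bM A.mulVecLin
      = LinearMap.toMatrix bN bM N.subtype * LinearMap.toMatrix bM bN (φ : (Fin n → K[X]) →ₗ[K[X]] N) := by
    rw [← LinearMap.toMatrix_comp bM bN bM, hcomp]
  have hD : LinearMap.toMatrix bN bM N.subtype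
      = Equiv.Perm.permMatrix K[X] e.symm * Matrix.diagonal a := by
    ext j i
    rw [Matrix.mul_diagonal, LinearMap.toMatrix_apply]
    simp only [Submodule.coe_subtype]
    rw [hrepr]
    simp only [Equiv.Perm.permMatrix, PEquiv.toMatrix_apply, Equiv.toPEquiv_apply,
      Option.mem_def, Option.some.injEq]
    by_cases hij : f i = j
    · rw [if_pos hij, if_pos, one_mul]
      rw [← hij, ← hef, e.symm_apply_apply]
    · rw [if_neg hij, if_neg, zero_mul]
      intro hc
      exact hij (by rw [← hef, ← hc, e.apply_symm_apply])
  have hu : IsUnit (LinearMap.toMatrix bM bN (φ : (Fin n → K[X]) →ₗ[K[X]] N)).det :=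
    LinearEquiv.isUnit_det φ bM bN
  have hs : IsUnit (((Equiv.Perm.sign e.symm : ℤ) : K[X])) := by
    rcases Int.units_eq_one_or (Equiv.Perm.sign e.symm) with h | h <;> simp [h]
  have hdetA : A.det = (((Equiv.Perm.sign e.symm : ℤ) : K[X]) * ∏ i, a i)
      * (LinearMap.toMatrix bM bN (φ : (Fin n → K[X]) →ₗ[K[X]] N)).det := by
    rw [← LinearMap.det_toLin' A, Matrix.toLin'_apply', ← LinearMap.det_toMatrix bM, hDP,
      Matrix.det_mul, hD, Matrix.det_mul, Matrix.det_permutation, Matrix.det_diagonal]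
  have hprod : (∏ i, a i) ≠ 0 := Finset.prod_ne_zero_iff.mpr fun i _ => ha i
  have hdeg : A.det.natDegree = ∑ i, (a i).natDegree := by
    rw [hdetA, natDegree_mul (mul_ne_zero hs.ne_zero hprod) hu.ne_zero,
      natDegree_eq_zero_of_isUnit hu, add_zero, natDegree_mul hs.ne_zero hprod,
      Polynomial.natDegree_intCast, zero_add, natDegree_prod _ _ fun i _ => ha i]
  refine ⟨hFD, ?_⟩
  rw [q.finrank_eq, Module.finrank_pi_fintype, hdeg]
  rw [← Equiv.sum_comp e.symm fun i => (a i).natDegree]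
  exact Finset.sum_congr rfl fun j _ => (hfin _ (ha _)).2
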